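/- Let Y be the random walk on ℤ with i.i.d. steps equal to +1 with probability p and −1 with probability 1−p (0 < p < 1), let ξ := inf{t ≥ 0 : Y_t = 0}, and for β > 0 and n ∈ ℕ set α_n := E^n[1/(1+βξ)], where E^n denotes expectation for the walk started at Y_0 = n and 1/(1+β·∞) := 0. Then α_n ≥ (α₁)^n for all n ∈ ℕ, n ≥ 1. -/

import Mathlib

open MeasureTheory ProbabilityTheory Set Filter Topology
open scoped ENNReal ENat

noncomputable section

/-- The σ-algebra generated by the first `n+1` coordinates of the path space:
the natural filtration of the coordinate process at time `n`. -/
def pathSigma (𝕏 : Type*) [m : MeasurableSpace 𝕏] (n : ℕ) : MeasurableSpace (ℕ → 𝕏) :=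
  ⨆ i ∈ Finset.range (n + 1), MeasurableSpace.comap (fun ω : ℕ → 𝕏 => ω i) m

/-- `Pr` is the family of laws of the time-homogeneous Markov chain with one-step
transition kernel `Q`: under `Pr x` the chain starts at `x`, and the Markov property
`Pr^x(X_{n+1} ∈ A | 𝓕_n) = Q(X_n, A)` holds. -/
structure IsMarkovChainLaw {𝕏 : Type*} [MeasurableSpace 𝕏]
    (Pr : Kernel 𝕏 (ℕ → 𝕏)) (Q : Kernel 𝕏 𝕏) : Prop where
  start : ∀ x : 𝕏, Pr x {ω | ω 0 = x} = 1
  markov : ∀ (x : 𝕏) (n : ℕ) (B : Set (ℕ → 𝕏)), MeasurableSet[pathSigma 𝕏 n] B →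
    ∀ A : Set 𝕏, MeasurableSet A →
      Pr x (B ∩ {ω | ω (n + 1) ∈ A}) = ∫⁻ ω in B, Q (ω n) A ∂(Pr x)

/-- The first hitting time `ξ = inf {t ≥ 0 : Y_t = 0}` of `0` by the random walk path `ω`. -/
def walkHit (ω : ℕ → ℤ) : ℕ∞ :=
  sInf {n : ℕ∞ | ∃ t : ℕ, n = (t : ℕ∞) ∧ ω t = 0}

/-- The discounted quantity `1 / (1 + β(ξ + s))`, equal to `0` on `{ξ = ∞}`. -/
def walkDisc (β : ℝ) (s : ℕ) (ω : ℕ → ℤ) : ℝ :=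
  if walkHit ω = ⊤ then 0 else 1 / (1 + β * ((walkHit ω).toNat + s))

/-- `α_n = E^n[1 / (1 + βξ)]`. -/
def alphaWalk (PrY : Kernel ℤ (ℕ → ℤ)) (β : ℝ) (n : ℤ) : ℝ :=
  ∫ ω, walkDisc β 0 ω ∂(PrY n)

/-- `α' = E^1[1 / (1 + β(ξ + 1))]`. -/
def alphaWalk' (PrY : Kernel ℤ (ℕ → ℤ)) (β : ℝ) : ℝ :=
  ∫ ω, walkDisc β 1 ω ∂(PrY 1)

namespace WalkProof

lemma measZ {X : Type*} [MeasurableSpace X] (f : ℤ → X) : Measurable f := measurable_from_top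
lemma measENat {X : Type*} [MeasurableSpace X] (f : ℕ∞ → X) : Measurable f := measurable_from_top

lemma measSet_eval (t : ℕ) (A : Set ℤ) : MeasurableSet {ω : ℕ → ℤ | ω t ∈ A} :=
  measurable_pi_apply t trivial

/-! ### walkHit -/

lemma walkHit_le {ω : ℕ → ℤ} {t : ℕ} (h : ω t = 0) : walkHit ω ≤ (t : ℕ∞) :=
  sInf_le ⟨t, rfl, h⟩

lemma walkHit_eq_top {ω : ℕ → ℤ} (h : ∀ t, ω t ≠ 0) : walkHit ω = ⊤ := by
  rw [walkHit]
  rw [show {n : ℕ∞ | ∃ t : ℕ, n = (t : ℕ∞) ∧ ω t = 0} = ∅ from ?_, sInf_empty]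
  ext n
  simp only [mem_setOf_eq, mem_empty_iff_false, iff_false, not_exists]
  exact fun t ht => h t ht.2

lemma exists_zero_of_ne_top {ω : ℕ → ℤ} (h : walkHit ω ≠ ⊤) : ∃ t, ω t = 0 := by
  by_contra hc
  push_neg at hc
  exact h (walkHit_eq_top hc)

lemma walkHit_eq {ω : ℕ → ℤ} {t : ℕ} (h0 : ω t = 0) (hlt : ∀ s, s < t → ω s ≠ 0) :
    walkHit ω = (t : ℕ∞) := by
  refine le_antisymm (walkHit_le h0) (le_sInf ?_)
  rintro n ⟨s, rfl, hs⟩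
  have : t ≤ s := not_lt.1 fun hst => hlt s hst hs
  exact_mod_cast this

lemma walkHit_eq_coe_iff {ω : ℕ → ℤ} {t : ℕ} :
    walkHit ω = (t : ℕ∞) ↔ (ω t = 0 ∧ ∀ s, s < t → ω s ≠ 0) := by
  constructor
  · intro h
    have hne : walkHit ω ≠ ⊤ := by simp [h]
    have hex : ∃ s, ω s = 0 := exists_zero_of_ne_top hne
    have h2 : walkHit ω = (Nat.find hex : ℕ∞) :=
      walkHit_eq (Nat.find_spec hex) (fun s hs => Nat.find_min hex hs)
    have : (t : ℕ∞) = (Nat.find hex : ℕ∞) := by rw [← h, h2]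
    have ht : t = Nat.find hex := by exact_mod_cast this
    subst ht
    exact ⟨Nat.find_spec hex, fun s hs => Nat.find_min hex hs⟩
  · rintro ⟨h0, hlt⟩
    exact walkHit_eq h0 hlt

lemma walkHit_shift {ω : ℕ → ℤ} {t : ℕ} (h : ∀ s, s < t → ω s ≠ 0) :
    walkHit ω = (t : ℕ∞) + walkHit (fun i => ω (t + i)) := by
  by_cases hz : ∃ s, ω (t + s) = 0
  · have hT : ω (t + Nat.find hz) = 0 := Nat.find_spec hz
    have hmin : ∀ s, s < Nat.find hz → ω (t + s) ≠ 0 := fun s hs => Nat.find_min hz hs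
    have h1 : walkHit (fun i => ω (t + i)) = (Nat.find hz : ℕ∞) := walkHit_eq hT hmin
    have h2 : walkHit ω = ((t + Nat.find hz : ℕ) : ℕ∞) := by
      refine walkHit_eq hT ?_
      intro s hs
      by_cases hst : s < t
      · exact h s hst
      · have h3 : t + (s - t) = s := by omega
        have h4 : s - t < Nat.find hz := by omega
        rw [← h3]
        exact hmin _ h4
    rw [h1, h2]
    push_cast
    rfl
  · push_neg at hz
    have hall : ∀ s, ω s ≠ 0 := by
      intro s
      by_cases hst : s < t
      · exact h s hst
      · have h3 : t + (s - t) = s := by omega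
        rw [← h3]; exact hz _
    rw [walkHit_eq_top hall, walkHit_eq_top hz]
    simp

/-! ### walkDisc -/

lemma one_add_pos {β : ℝ} (hβ : 0 ≤ β) (x : ℝ) (hx : 0 ≤ x) : (0:ℝ) < 1 + β * x := by
  nlinarith

lemma walkDisc_nonneg {β : ℝ} (hβ : 0 ≤ β) (s : ℕ) (ω : ℕ → ℤ) : 0 ≤ walkDisc β s ω := by
  rw [walkDisc]
  split
  · exact le_refl 0
  · have := one_add_pos hβ (((walkHit ω).toNat : ℝ) + s) (by positivity)
    positivity

lemma walkDisc_le_one {β : ℝ} (hβ : 0 ≤ β) (s : ℕ) (ω : ℕ → ℤ) : walkDisc β s ω ≤ 1 := by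
  rw [walkDisc]
  split
  · norm_num
  · rw [div_le_one (one_add_pos hβ _ (by positivity))]
    nlinarith [mul_nonneg hβ (show (0:ℝ) ≤ ((walkHit ω).toNat : ℝ) + s by positivity)]

lemma walkDisc_shift {β : ℝ} {ω : ℕ → ℤ} {t : ℕ} (h : ∀ s, s < t → ω s ≠ 0) :
    walkDisc β 0 ω = walkDisc β t (fun i => ω (t + i)) := by
  by_cases hc : ∃ s, ω (t + s) = 0
  · have h1 : walkHit (fun i => ω (t + i)) = (Nat.find hc : ℕ∞) :=
      walkHit_eq (Nat.find_spec hc) (fun s hs => Nat.find_min hc hs)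
    have h2 : walkHit ω = ((t + Nat.find hc : ℕ) : ℕ∞) := by
      rw [walkHit_shift h, h1]; push_cast; rfl
    rw [walkDisc, walkDisc, h1, h2]
    rw [if_neg (ENat.coe_ne_top _), if_neg (ENat.coe_ne_top _)]
    rw [ENat.toNat_coe, ENat.toNat_coe]
    congr 1
    push_cast
    ring
  · push_neg at hc
    have hall : ∀ s, ω s ≠ 0 := by
      intro s
      by_cases hst : s < t
      · exact h s hst
      · have h3 : t + (s - t) = s := by omega
        rw [← h3]; exact hc _
    rw [walkDisc, walkDisc, walkHit_eq_top hall, walkHit_eq_top hc]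
    simp

lemma walkDisc_mul_le {β : ℝ} (hβ : 0 ≤ β) (t : ℕ) (ω : ℕ → ℤ) :
    1 / (1 + β * t) * walkDisc β 0 ω ≤ walkDisc β t ω := by
  rw [walkDisc, walkDisc]
  split
  · simp
  · set h : ℝ := ((walkHit ω).toNat : ℝ) with hh
    have hh0 : 0 ≤ h := by positivity
    have ht0 : (0:ℝ) ≤ (t:ℝ) := by positivity
    have p1 : (0:ℝ) < 1 + β * (t:ℝ) := one_add_pos hβ _ ht0
    have p2 : (0:ℝ) < 1 + β * (h + ((0:ℕ):ℝ)) := one_add_pos hβ _ (by positivity)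
    have p3 : (0:ℝ) < 1 + β * (h + (t:ℝ)) := one_add_pos hβ _ (by positivity)
    rw [div_mul_div_comm, one_mul]
    rw [div_le_div_iff₀ (by positivity) p3]
    push_cast at p2 ⊢
    nlinarith [mul_nonneg (mul_nonneg hβ hβ) (mul_nonneg ht0 hh0)]

lemma measurable_walkHit : Measurable walkHit := by
  apply measurable_to_countable'
  intro y
  have : walkHit ⁻¹' {y} = {ω : ℕ → ℤ | walkHit ω = y} := rfl
  rw [this]
  cases y using ENat.recTopCoe with
  | top =>
    have he : {ω : ℕ → ℤ | walkHit ω = ⊤} = ⋂ t, {ω : ℕ → ℤ | ω t ∈ ({0}ᶜ : Set ℤ)} := by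
      ext ω
      simp only [mem_setOf_eq, mem_iInter, mem_compl_iff, mem_singleton_iff]
      constructor
      · intro hh t ht
        exact absurd (hh ▸ walkHit_le (ω := ω) (t := t) ht) (by simp)
      · exact walkHit_eq_top
    rw [he]; exact MeasurableSet.iInter fun t => measSet_eval t _
  | coe t =>
    have he : {ω : ℕ → ℤ | walkHit ω = (t : ℕ∞)} =
        {ω : ℕ → ℤ | ω t ∈ ({0} : Set ℤ)} ∩
          ⋂ s, ⋂ (_ : s < t), {ω : ℕ → ℤ | ω s ∈ ({0}ᶜ : Set ℤ)} := by
      ext ω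
      simp only [mem_setOf_eq, walkHit_eq_coe_iff, mem_inter_iff, mem_iInter,
        mem_singleton_iff, mem_compl_iff]
    rw [he]
    exact (measSet_eval t _).inter
      (MeasurableSet.iInter fun s => MeasurableSet.iInter fun _ => measSet_eval s _)

lemma measurable_walkDisc (β : ℝ) (s : ℕ) : Measurable (walkDisc β s) :=
  (measENat (fun h : ℕ∞ => if h = ⊤ then (0:ℝ) else 1 / (1 + β * (h.toNat + s)))).comp
    measurable_walkHit

/-! ### pathSigma and boxes -/

lemma pathSigma_le (n : ℕ) : pathSigma ℤ n ≤ (inferInstance : MeasurableSpace (ℕ → ℤ)) := by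
  refine iSup_le fun i => iSup_le fun _ => ?_
  exact measurable_iff_comap_le.1 (measurable_pi_apply i)

lemma pathSigma_mono {m n : ℕ} (h : m ≤ n) : pathSigma ℤ m ≤ pathSigma ℤ n := by
  refine iSup_le fun i => iSup_le fun hi => ?_
  exact le_iSup₂ (f := fun (i : ℕ) (_ : i ∈ Finset.range (n+1)) =>
    MeasurableSpace.comap (fun ω : ℕ → ℤ => ω i) inferInstance) i
    (Finset.mem_range.2 (lt_of_lt_of_le (Finset.mem_range.1 hi) (by omega)))

lemma measurableSet_le {α : Type*} {m1 m2 : MeasurableSpace α} (h : m1 ≤ m2) {s : Set α}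
    (hs : MeasurableSet[m1] s) : MeasurableSet[m2] s := h s hs

lemma measurableSet_eval_pathSigma {i n : ℕ} (h : i ≤ n) (A : Set ℤ) :
    MeasurableSet[pathSigma ℤ n] {ω : ℕ → ℤ | ω i ∈ A} := by
  have h1 : MeasurableSet[MeasurableSpace.comap (fun ω : ℕ → ℤ => ω i) inferInstance]
      {ω : ℕ → ℤ | ω i ∈ A} := ⟨A, trivial, rfl⟩
  refine measurableSet_le ?_ h1
  exact le_iSup₂ (f := fun (j : ℕ) (_ : j ∈ Finset.range (n+1)) =>
    MeasurableSpace.comap (fun ω : ℕ → ℤ => ω j) inferInstance) i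
    (Finset.mem_range.2 (by omega))

def boxes : Set (Set (ℕ → ℤ)) :=
  {S | ∃ (k : ℕ) (A : ℕ → Set ℤ), S = {ω | ∀ i, i ≤ k → ω i ∈ A i}}

lemma box_measurableSet (k : ℕ) (A : ℕ → Set ℤ) :
    MeasurableSet {ω : ℕ → ℤ | ∀ i, i ≤ k → ω i ∈ A i} := by
  have he : {ω : ℕ → ℤ | ∀ i, i ≤ k → ω i ∈ A i}
      = ⋂ i, ⋂ (_ : i ≤ k), {ω : ℕ → ℤ | ω i ∈ A i} := by
    ext ω; simp [mem_iInter]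
  rw [he]
  exact MeasurableSet.iInter fun i => MeasurableSet.iInter fun _ => measSet_eval i _

lemma isPiSystem_boxes : IsPiSystem boxes := by
  rintro S ⟨k, A, rfl⟩ T ⟨l, B, rfl⟩ -
  refine ⟨max k l, fun i => (if i ≤ k then A i else univ) ∩ (if i ≤ l then B i else univ), ?_⟩
  ext ω
  simp only [mem_inter_iff, mem_setOf_eq]
  constructor
  · rintro ⟨h1, h2⟩ i hi
    constructor
    · split_ifs with h
      · exact h1 i h
      · exact mem_univ _
    · split_ifs with h
      · exact h2 i h
      · exact mem_univ _
  · intro h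
    constructor
    · intro i hik
      have := (h i (le_trans hik (le_max_left _ _))).1
      rwa [if_pos hik] at this
    · intro i hil
      have := (h i (le_trans hil (le_max_right _ _))).2
      rwa [if_pos hil] at this

lemma generateFrom_boxes :
    (inferInstance : MeasurableSpace (ℕ → ℤ)) = MeasurableSpace.generateFrom boxes := by
  refine le_antisymm ?_ ?_
  · have hpi : (inferInstance : MeasurableSpace (ℕ → ℤ))
        = ⨆ i : ℕ, MeasurableSpace.comap (fun ω : ℕ → ℤ => ω i) inferInstance := rfl
    rw [hpi]
    refine iSup_le fun i => ?_
    rintro s ⟨A, -, rfl⟩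
    refine MeasurableSpace.measurableSet_generateFrom ?_
    refine ⟨i, fun j => if j = i then A else univ, ?_⟩
    ext ω
    simp only [mem_preimage, mem_setOf_eq]
    constructor
    · intro hA j hj
      split_ifs with h
      · rwa [h]
      · exact mem_univ _
    · intro h
      have := h i le_rfl
      rwa [if_pos rfl] at this
  · refine MeasurableSpace.generateFrom_le ?_
    rintro S ⟨k, A, rfl⟩
    exact box_measurableSet k A

/-! ### Markov machinery -/

section Kernels

variable (PrY : Kernel ℤ (ℕ → ℤ)) [IsMarkovKernel PrY] (QY : Kernel ℤ ℤ) [IsMarkovKernel QY]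

/-- Iterated kernel integrals over a sequence of constraint sets. -/
def W (QY : Kernel ℤ ℤ) : ℕ → (ℕ → Set ℤ) → ℤ → ℝ≥0∞
  | 0, _, _ => 1
  | (k+1), A, y => ∫⁻ z, (A 0).indicator (W QY k (fun i => A (i+1))) z ∂(QY y)

lemma lintegral_QY {p : ℝ}
    (hQY : ∀ n : ℤ, QY n = ENNReal.ofReal p • Measure.dirac (n + 1)
      + ENNReal.ofReal (1 - p) • Measure.dirac (n - 1)) (x : ℤ) (f : ℤ → ℝ≥0∞) :
    ∫⁻ z, f z ∂(QY x) = ENNReal.ofReal p * f (x + 1) + ENNReal.ofReal (1 - p) * f (x - 1) := by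
  rw [hQY x, lintegral_add_measure, lintegral_smul_measure, lintegral_smul_measure,
    lintegral_dirac' _ (measZ f), lintegral_dirac' _ (measZ f), smul_eq_mul, smul_eq_mul]

lemma markov_lintegral (hwalk : IsMarkovChainLaw PrY QY) (x : ℤ) (m : ℕ) {B : Set (ℕ → ℤ)}
    (hB : MeasurableSet[pathSigma ℤ m] B) (f : ℤ → ℝ≥0∞) :
    ∫⁻ ω in B, f (ω (m+1)) ∂(PrY x) = ∫⁻ ω in B, (∫⁻ z, f z ∂(QY (ω m))) ∂(PrY x) := by
  have hBm : MeasurableSet B := measurableSet_le (pathSigma_le m) hB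
  have hmeas : ∀ z : ℤ, Measurable (fun ω : ℕ → ℤ => if ω (m+1) = z then f z else 0) := by
    intro z
    have : (fun ω : ℕ → ℤ => if ω (m+1) = z then f z else 0)
        = fun ω => ({ω : ℕ → ℤ | ω (m+1) ∈ ({z} : Set ℤ)}).indicator (fun _ => f z) ω := by
      funext ω
      rw [indicator_apply]
      simp [mem_setOf_eq]
    rw [this]
    exact Measurable.indicator measurable_const (measSet_eval (m+1) {z})
  have h1 : ∀ ω : ℕ → ℤ, f (ω (m+1)) = ∑' z : ℤ, if ω (m+1) = z then f z else 0 := by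
    intro ω
    have : (fun z : ℤ => if ω (m+1) = z then f z else 0)
        = fun z : ℤ => if z = ω (m+1) then f (ω (m+1)) else 0 := by
      funext z
      by_cases h : z = ω (m+1)
      · simp [h]
      · rw [if_neg (fun hh : ω (m+1) = z => h hh.symm), if_neg h]
    rw [this, tsum_ite_eq]
  calc ∫⁻ ω in B, f (ω (m+1)) ∂(PrY x)
      = ∫⁻ ω in B, ∑' z : ℤ, (if ω (m+1) = z then f z else 0) ∂(PrY x) :=
        lintegral_congr fun ω => h1 ω
    _ = ∑' z : ℤ, ∫⁻ ω in B, (if ω (m+1) = z then f z else 0) ∂(PrY x) :=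
        lintegral_tsum (fun z => (hmeas z).aemeasurable)
    _ = ∑' z : ℤ, f z * PrY x (B ∩ {ω : ℕ → ℤ | ω (m+1) ∈ ({z} : Set ℤ)}) := by
        refine tsum_congr fun z => ?_
        have : (fun ω : ℕ → ℤ => if ω (m+1) = z then f z else 0)
            = fun ω => ({ω : ℕ → ℤ | ω (m+1) ∈ ({z} : Set ℤ)}).indicator (fun _ => f z) ω := by
          funext ω
          rw [indicator_apply]
          simp [mem_setOf_eq]
        rw [this, lintegral_indicator_const (measSet_eval (m+1) {z}),
          Measure.restrict_apply (measSet_eval (m+1) {z}), inter_comm]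
    _ = ∑' z : ℤ, f z * ∫⁻ ω in B, QY (ω m) {z} ∂(PrY x) := by
        refine tsum_congr fun z => ?_
        rw [hwalk.markov x m B hB {z} trivial]
    _ = ∑' z : ℤ, ∫⁻ ω in B, f z * QY (ω m) {z} ∂(PrY x) := by
        refine tsum_congr fun z => ?_
        have hg : Measurable fun ω : ℕ → ℤ => QY (ω m) {z} :=
          (Kernel.measurable_coe QY trivial).comp (measurable_pi_apply m)
        exact (lintegral_const_mul (f z) hg).symm
    _ = ∫⁻ ω in B, ∑' z : ℤ, f z * QY (ω m) {z} ∂(PrY x) := by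
        refine (lintegral_tsum fun z => ?_).symm
        exact (measurable_const.mul ((Kernel.measurable_coe QY trivial).comp
          (measurable_pi_apply m))).aemeasurable
    _ = ∫⁻ ω in B, (∫⁻ z, f z ∂(QY (ω m))) ∂(PrY x) := by
        refine lintegral_congr fun ω => ?_
        exact (lintegral_countable' f).symm

lemma iter (hwalk : IsMarkovChainLaw PrY QY) (x : ℤ) :
    ∀ (k m : ℕ) (B : Set (ℕ → ℤ)), MeasurableSet[pathSigma ℤ m] B →
    ∀ (A : ℕ → Set ℤ),
    PrY x (B ∩ {ω | ∀ i, i < k → ω (m+1+i) ∈ A i}) = ∫⁻ ω in B, W QY k A (ω m) ∂(PrY x) := by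
  classical
  intro k
  induction k with
  | zero =>
    intro m B hB A
    have h1 : {ω : ℕ → ℤ | ∀ i, i < 0 → ω (m+1+i) ∈ A i} = univ := by
      ext ω; simp
    have hBm : MeasurableSet B := measurableSet_le (pathSigma_le m) hB
    rw [h1, inter_univ]
    simp [W, setLIntegral_one]
  | succ k ih =>
    intro m B hB A
    have hS : MeasurableSet[pathSigma ℤ (m+1)] (B ∩ {ω : ℕ → ℤ | ω (m+1) ∈ A 0}) :=
      ((pathSigma_mono (Nat.le_succ m)) B hB).inter
        (measurableSet_eval_pathSigma (le_refl (m+1)) (A 0))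
    have key : B ∩ {ω : ℕ → ℤ | ∀ i, i < k+1 → ω (m+1+i) ∈ A i}
        = (B ∩ {ω : ℕ → ℤ | ω (m+1) ∈ A 0})
          ∩ {ω : ℕ → ℤ | ∀ i, i < k → ω ((m+1)+1+i) ∈ A (i+1)} := by
      ext ω
      simp only [mem_inter_iff, mem_setOf_eq, and_assoc]
      constructor
      · rintro ⟨hb, h⟩
        refine ⟨hb, by simpa using h 0 (by omega), fun i hi => ?_⟩
        have := h (i+1) (by omega)
        rwa [show m+1+(i+1) = (m+1)+1+i by omega] at this
      · rintro ⟨hb, h0, hs⟩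
        refine ⟨hb, fun i hi => ?_⟩
        match i with
        | 0 => simpa using h0
        | (j+1) =>
          have := hs j (by omega)
          rwa [show (m+1)+1+j = m+1+(j+1) by omega] at this
    rw [key, ih (m+1) _ hS (fun i => A (i+1))]
    have hmB : MeasurableSet B := measurableSet_le (pathSigma_le m) hB
    have hmS : MeasurableSet {ω : ℕ → ℤ | ω (m+1) ∈ A 0} := measSet_eval (m+1) (A 0)
    have e1 : ∫⁻ ω in B ∩ {ω : ℕ → ℤ | ω (m+1) ∈ A 0},
          W QY k (fun i => A (i+1)) (ω (m+1)) ∂(PrY x)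
        = ∫⁻ ω in B, (A 0).indicator (W QY k (fun i => A (i+1))) (ω (m+1)) ∂(PrY x) := by
      rw [inter_comm, ← Measure.restrict_restrict hmS]
      rw [← lintegral_indicator hmS]
      refine lintegral_congr fun ω => ?_
      rw [indicator_apply, indicator_apply]
      simp [mem_setOf_eq]
    rw [e1, markov_lintegral PrY QY hwalk x m hB _]
    rfl

lemma ae_start (hwalk : IsMarkovChainLaw PrY QY) (x : ℤ) : ∀ᵐ ω ∂(PrY x), ω 0 = x := by
  have h := hwalk.start x
  have hm : MeasurableSet {ω : ℕ → ℤ | ω 0 = x} := by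
    have : {ω : ℕ → ℤ | ω 0 = x} = {ω : ℕ → ℤ | ω 0 ∈ ({x} : Set ℤ)} := by
      ext; simp
    rw [this]; exact measSet_eval 0 {x}
  rw [ae_iff]
  have := measure_compl hm (measure_ne_top (PrY x) _)
  rw [h] at this
  simp [measure_univ] at this
  exact this

lemma pr_box (hwalk : IsMarkovChainLaw PrY QY) (y : ℤ) (A : ℕ → Set ℤ) (k : ℕ) :
    PrY y {ω | ∀ i, i ≤ k → ω i ∈ A i}
      = (A 0).indicator (W QY k (fun i => A (i+1))) y := by
  classical
  have key : {ω : ℕ → ℤ | ∀ i, i ≤ k → ω i ∈ A i}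
      = {ω : ℕ → ℤ | ω 0 ∈ A 0} ∩ {ω : ℕ → ℤ | ∀ i, i < k → ω (0+1+i) ∈ A (i+1)} := by
    ext ω
    simp only [mem_inter_iff, mem_setOf_eq]
    constructor
    · intro h
      refine ⟨h 0 (by omega), fun i hi => ?_⟩
      have := h (i+1) (by omega)
      rwa [show 0+1+i = i+1 by omega]
    · rintro ⟨h0, hs⟩ i hi
      match i with
      | 0 => exact h0
      | (j+1) =>
        have := hs j (by omega)
        rwa [show 0+1+j = j+1 by omega] at this
  rw [key, iter PrY QY hwalk y k 0 _ (measurableSet_eval_pathSigma (le_refl 0) (A 0)) _]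
  have h0 := ae_start PrY QY hwalk y
  have hmS : MeasurableSet {ω : ℕ → ℤ | ω 0 ∈ A 0} := measSet_eval 0 (A 0)
  rw [← lintegral_indicator hmS]
  have : ∀ᵐ ω ∂(PrY y), ({ω : ℕ → ℤ | ω 0 ∈ A 0}).indicator
      (fun ω => W QY k (fun i => A (i+1)) (ω 0)) ω
      = (A 0).indicator (W QY k (fun i => A (i+1))) y := by
    filter_upwards [h0] with ω hω
    rw [indicator_apply, indicator_apply]
    simp [mem_setOf_eq, hω]
  rw [lintegral_congr_ae this, lintegral_const, measure_univ, mul_one]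

/-! ### Full Markov property and translation invariance -/

def shiftMap (m : ℕ) : (ℕ → ℤ) → (ℕ → ℤ) := fun ω i => ω (m + i)

lemma measurable_shiftMap (m : ℕ) : Measurable (shiftMap m) :=
  measurable_pi_lambda _ fun i => measurable_pi_apply (m + i)

lemma markov_shift (hwalk : IsMarkovChainLaw PrY QY) (x : ℤ) (m : ℕ) {B : Set (ℕ → ℤ)}
    (hB : MeasurableSet[pathSigma ℤ m] B) :
    ((PrY x).restrict B).map (shiftMap m) = ((PrY x).restrict B).bind (fun ω => PrY (ω m)) := by
  classical
  have hBm : MeasurableSet B := measurableSet_le (pathSigma_le m) hB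
  have hmeasPr : Measurable (fun ω : ℕ → ℤ => PrY (ω m)) :=
    PrY.measurable.comp (measurable_pi_apply m)
  haveI : IsFiniteMeasure (((PrY x).restrict B).map (shiftMap m)) := by
    constructor
    rw [Measure.map_apply (measurable_shiftMap m) MeasurableSet.univ]
    simp only [preimage_univ]
    exact measure_lt_top _ _
  refine ext_of_generate_finite boxes generateFrom_boxes isPiSystem_boxes ?_ ?_
  · rintro S ⟨k, A, rfl⟩
    have hbox := box_measurableSet k A
    rw [Measure.map_apply (measurable_shiftMap m) hbox]
    have hpre : shiftMap m ⁻¹' {ω : ℕ → ℤ | ∀ i, i ≤ k → ω i ∈ A i}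
        = {ω : ℕ → ℤ | ∀ i, i ≤ k → ω (m + i) ∈ A i} := rfl
    rw [hpre]
    have hmpre : MeasurableSet {ω : ℕ → ℤ | ∀ i, i ≤ k → ω (m + i) ∈ A i} := by
      rw [← hpre]; exact measurable_shiftMap m hbox
    rw [Measure.restrict_apply hmpre]
    have key : {ω : ℕ → ℤ | ∀ i, i ≤ k → ω (m + i) ∈ A i} ∩ B
        = (B ∩ {ω : ℕ → ℤ | ω m ∈ A 0}) ∩ {ω : ℕ → ℤ | ∀ i, i < k → ω (m+1+i) ∈ A (i+1)} := by
      ext ω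
      simp only [mem_inter_iff, mem_setOf_eq, and_assoc]
      constructor
      · rintro ⟨h, hb⟩
        refine ⟨hb, by simpa using h 0 (by omega), fun i hi => ?_⟩
        have := h (i+1) (by omega)
        rwa [show m+(i+1) = m+1+i by omega] at this
      · rintro ⟨hb, h0, hs⟩
        refine ⟨fun i hi => ?_, hb⟩
        match i with
        | 0 => simpa using h0
        | (j+1) =>
          have := hs j (by omega)
          rwa [show m+1+j = m+(j+1) by omega] at this
    have hS : MeasurableSet[pathSigma ℤ m] (B ∩ {ω : ℕ → ℤ | ω m ∈ A 0}) :=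
      hB.inter (measurableSet_eval_pathSigma (le_refl m) (A 0))
    rw [key, iter PrY QY hwalk x k m _ hS (fun i => A (i+1))]
    have hmS : MeasurableSet {ω : ℕ → ℤ | ω m ∈ A 0} := measSet_eval m (A 0)
    have e1 : ∫⁻ ω in B ∩ {ω : ℕ → ℤ | ω m ∈ A 0},
          W QY k (fun i => A (i+1)) (ω m) ∂(PrY x)
        = ∫⁻ ω in B, (A 0).indicator (W QY k (fun i => A (i+1))) (ω m) ∂(PrY x) := by
      rw [inter_comm, ← Measure.restrict_restrict hmS, ← lintegral_indicator hmS]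
      refine lintegral_congr fun ω => ?_
      rw [indicator_apply, indicator_apply]
      simp [mem_setOf_eq]
    rw [e1, Measure.bind_apply hbox hmeasPr.aemeasurable]
    refine Eq.symm (lintegral_congr fun ω => ?_)
    exact pr_box PrY QY hwalk (ω m) A k
  · rw [Measure.map_apply (measurable_shiftMap m) MeasurableSet.univ]
    rw [Measure.bind_apply MeasurableSet.univ hmeasPr.aemeasurable]
    simp only [preimage_univ]
    have : ∀ ω : ℕ → ℤ, PrY (ω m) univ = 1 := fun ω => measure_univ
    simp only [this, lintegral_one]

lemma markov_shift_lintegral (hwalk : IsMarkovChainLaw PrY QY) (x : ℤ) (m : ℕ) {B : Set (ℕ → ℤ)}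
    (hB : MeasurableSet[pathSigma ℤ m] B) (g : (ℕ → ℤ) → ℝ≥0∞) (hg : Measurable g) :
    ∫⁻ ω in B, g (shiftMap m ω) ∂(PrY x)
      = ∫⁻ ω in B, (∫⁻ ψ, g ψ ∂(PrY (ω m))) ∂(PrY x) := by
  have hmeasPr : Measurable (fun ω : ℕ → ℤ => PrY (ω m)) :=
    PrY.measurable.comp (measurable_pi_apply m)
  calc ∫⁻ ω in B, g (shiftMap m ω) ∂(PrY x)
      = ∫⁻ ψ, g ψ ∂(((PrY x).restrict B).map (shiftMap m)) :=
        (lintegral_map hg (measurable_shiftMap m)).symm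
    _ = ∫⁻ ψ, g ψ ∂(((PrY x).restrict B).bind (fun ω => PrY (ω m))) := by
        rw [markov_shift PrY QY hwalk x m hB]
    _ = ∫⁻ ω in B, (∫⁻ ψ, g ψ ∂(PrY (ω m))) ∂(PrY x) :=
        Measure.lintegral_bind hmeasPr.aemeasurable hg.aemeasurable

def transMap (c : ℤ) : (ℕ → ℤ) → (ℕ → ℤ) := fun ω i => ω i + c

lemma measurable_transMap (c : ℤ) : Measurable (transMap c) :=
  measurable_pi_lambda _ fun i => (measZ (fun z : ℤ => z + c)).comp (measurable_pi_apply i)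

lemma W_trans {p : ℝ}
    (hQY : ∀ n : ℤ, QY n = ENNReal.ofReal p • Measure.dirac (n + 1)
      + ENNReal.ofReal (1 - p) • Measure.dirac (n - 1)) :
    ∀ (k : ℕ) (A : ℕ → Set ℤ) (y c : ℤ),
    W QY k (fun i => (fun z : ℤ => z + c) ⁻¹' A i) y = W QY k A (y + c) := by
  intro k
  induction k with
  | zero => intro A y c; rfl
  | succ k ih =>
    intro A y c
    show (∫⁻ z, ((fun z : ℤ => z + c) ⁻¹' A 0).indicator
        (W QY k (fun i => (fun z : ℤ => z + c) ⁻¹' A (i+1))) z ∂(QY y))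
      = ∫⁻ z, (A 0).indicator (W QY k (fun i => A (i+1))) z ∂(QY (y + c))
    rw [lintegral_QY QY hQY, lintegral_QY QY hQY]
    have key : ∀ z : ℤ, ((fun w : ℤ => w + c) ⁻¹' A 0).indicator
        (W QY k (fun i => (fun w : ℤ => w + c) ⁻¹' A (i+1))) z
        = (A 0).indicator (W QY k (fun i => A (i+1))) (z + c) := by
      intro z
      by_cases h : z + c ∈ A 0
      · rw [indicator_of_mem (show z ∈ (fun w : ℤ => w + c) ⁻¹' A 0 from h),
          indicator_of_mem h, ih]
      · rw [indicator_of_notMem (show z ∉ (fun w : ℤ => w + c) ⁻¹' A 0 from h),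
          indicator_of_notMem h]
    rw [key, key, show y + 1 + c = y + c + 1 by ring, show y - 1 + c = y + c - 1 by ring]

lemma trans_inv (hwalk : IsMarkovChainLaw PrY QY) {p : ℝ}
    (hQY : ∀ n : ℤ, QY n = ENNReal.ofReal p • Measure.dirac (n + 1)
      + ENNReal.ofReal (1 - p) • Measure.dirac (n - 1)) (x c : ℤ) :
    (PrY x).map (transMap c) = PrY (x + c) := by
  classical
  haveI : IsFiniteMeasure ((PrY x).map (transMap c)) := by
    constructor
    rw [Measure.map_apply (measurable_transMap c) MeasurableSet.univ]
    simp only [preimage_univ]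
    exact measure_lt_top _ _
  refine ext_of_generate_finite boxes generateFrom_boxes isPiSystem_boxes ?_ ?_
  · rintro S ⟨k, A, rfl⟩
    have hbox := box_measurableSet k A
    rw [Measure.map_apply (measurable_transMap c) hbox]
    have hpre : transMap c ⁻¹' {ω : ℕ → ℤ | ∀ i, i ≤ k → ω i ∈ A i}
        = {ω : ℕ → ℤ | ∀ i, i ≤ k → ω i ∈ (fun z : ℤ => z + c) ⁻¹' A i} := rfl
    rw [hpre, pr_box PrY QY hwalk x _ k, pr_box PrY QY hwalk (x + c) A k]
    by_cases h : x + c ∈ A 0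
    · rw [indicator_of_mem (show x ∈ (fun z : ℤ => z + c) ⁻¹' A 0 from h),
        indicator_of_mem h, W_trans QY hQY]
    · rw [indicator_of_notMem (show x ∉ (fun z : ℤ => z + c) ⁻¹' A 0 from h),
        indicator_of_notMem h]
  · rw [Measure.map_apply (measurable_transMap c) MeasurableSet.univ]
    simp [measure_univ]

lemma ae_nn (hwalk : IsMarkovChainLaw PrY QY) {p : ℝ}
    (hQY : ∀ n : ℤ, QY n = ENNReal.ofReal p • Measure.dirac (n + 1)
      + ENNReal.ofReal (1 - p) • Measure.dirac (n - 1)) (x : ℤ) :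
    ∀ᵐ ω ∂(PrY x), ∀ t : ℕ, ω (t+1) = ω t + 1 ∨ ω (t+1) = ω t - 1 := by
  rw [ae_all_iff]
  intro t
  rw [ae_iff]
  have hsub : {ω : ℕ → ℤ | ¬(ω (t+1) = ω t + 1 ∨ ω (t+1) = ω t - 1)}
      ⊆ ⋃ z : ℤ, ({ω : ℕ → ℤ | ω t ∈ ({z} : Set ℤ)}
        ∩ {ω : ℕ → ℤ | ω (t+1) ∈ ({w : ℤ | w ≠ z + 1 ∧ w ≠ z - 1})}) := by
    intro ω hω
    push_neg at hω
    exact mem_iUnion.2 ⟨ω t, ⟨mem_singleton_iff.2 rfl, hω.1, hω.2⟩⟩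
  refine measure_mono_null hsub (measure_iUnion_null fun z => ?_)
  have hBz : MeasurableSet[pathSigma ℤ t] {ω : ℕ → ℤ | ω t ∈ ({z} : Set ℤ)} :=
    measurableSet_eval_pathSigma (le_refl t) {z}
  have hmk := hwalk.markov x t _ hBz {w : ℤ | w ≠ z + 1 ∧ w ≠ z - 1} trivial
  rw [hmk]
  have hQz : QY z {w : ℤ | w ≠ z + 1 ∧ w ≠ z - 1} = 0 := by
    rw [hQY z]
    rw [Measure.add_apply, Measure.smul_apply, Measure.smul_apply,
      Measure.dirac_apply' _ MeasurableSpace.measurableSet_top, Measure.dirac_apply' _ MeasurableSpace.measurableSet_top]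
    simp [indicator_apply, mem_setOf_eq]
  have : ∀ ω ∈ {ω : ℕ → ℤ | ω t ∈ ({z} : Set ℤ)},
      QY (ω t) {w : ℤ | w ≠ z + 1 ∧ w ≠ z - 1} = 0 := by
    intro ω hω
    have : ω t = z := mem_singleton_iff.1 hω
    rw [this, hQz]
  rw [setLIntegral_congr_fun_ae (measSet_eval t {z}) (ae_of_all _ this), lintegral_zero]

/-! ### Main argument -/

def aL (PrY : Kernel ℤ (ℕ → ℤ)) (β : ℝ) (x : ℤ) : ℝ≥0∞ :=
  ∫⁻ ω, ENNReal.ofReal (walkDisc β 0 ω) ∂(PrY x)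

lemma stay_above {ω : ℕ → ℤ} {n : ℤ} (h0 : ω 0 = n + 1)
    (hnn : ∀ t : ℕ, ω (t+1) = ω t + 1 ∨ ω (t+1) = ω t - 1) :
    ∀ t : ℕ, (∀ s, s < t → ω s ≠ n) → ∀ s, s < t → n < ω s := by
  intro t hne s
  induction s with
  | zero => intro _; omega
  | succ s ih =>
    intro hlt
    have h1 : n < ω s := ih (by omega)
    have h2 := hnn s
    have h3 := hne (s+1) hlt
    omega

lemma key_step {p β : ℝ} (hβ : 0 < β) (hwalk : IsMarkovChainLaw PrY QY)
    (hQY : ∀ n : ℤ, QY n = ENNReal.ofReal p • Measure.dirac (n + 1)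
      + ENNReal.ofReal (1 - p) • Measure.dirac (n - 1)) (n : ℕ) :
    aL PrY β (n : ℤ) * aL PrY β 1 ≤ aL PrY β ((n : ℤ) + 1) := by
  classical
  set x : ℤ := (n : ℤ) + 1 with hx
  set E : ℕ → Set (ℕ → ℤ) := fun t => {ω | ω t = (n : ℤ) ∧ ∀ s, s < t → ω s ≠ (n : ℤ)}
    with hE
  have hEeq : ∀ t, E t = {ω : ℕ → ℤ | ω t ∈ ({(n : ℤ)} : Set ℤ)} ∩
      ⋂ s, ⋂ (_ : s < t), {ω : ℕ → ℤ | ω s ∈ ({(n : ℤ)}ᶜ : Set ℤ)} := by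
    intro t
    ext ω
    simp only [hE, mem_setOf_eq, mem_inter_iff, mem_iInter, mem_singleton_iff,
      mem_compl_iff]
  have hEmeas : ∀ t, MeasurableSet (E t) := fun t => by
    rw [hEeq t]
    exact (measSet_eval t _).inter
      (MeasurableSet.iInter fun s => MeasurableSet.iInter fun _ => measSet_eval s _)
  have hEpath : ∀ t, MeasurableSet[pathSigma ℤ t] (E t) := fun t => by
    rw [hEeq t]
    exact (measurableSet_eval_pathSigma (le_refl t) _).inter
      (MeasurableSet.iInter fun s => MeasurableSet.iInter fun hs =>
        measurableSet_eval_pathSigma (le_of_lt hs) _)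
  have hdisj : Pairwise (Function.onFun Disjoint E) := by
    intro a b hab
    rcases Nat.lt_or_ge a b with h | h
    · exact Set.disjoint_left.2 fun ω ha hb => hb.2 a h ha.1
    · have h' : b < a := by omega
      exact Set.disjoint_left.2 fun ω ha hb => ha.2 b h' hb.1
  set U : Set (ℕ → ℤ) := ⋃ t, E t with hU
  have hUmeas : MeasurableSet U := MeasurableSet.iUnion hEmeas
  have hUc : ∀ ω, ω ∉ U → ∀ s : ℕ, ω s ≠ (n : ℤ) := by
    intro ω hω s hs
    have hex : ∃ s, ω s = (n : ℤ) := ⟨s, hs⟩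
    exact hω (mem_iUnion.2
      ⟨Nat.find hex, Nat.find_spec hex, fun s' hs' => Nat.find_min hex hs'⟩)
  have hstart := ae_start PrY QY hwalk x
  have hnn := ae_nn PrY QY hwalk hQY x
  set f : (ℕ → ℤ) → ℝ≥0∞ := fun ω => ENNReal.ofReal (walkDisc β 0 ω) with hf
  have hfm : Measurable f := ENNReal.measurable_ofReal.comp (measurable_walkDisc β 0)
  -- decomposition of aL x
  have hsplit : aL PrY β x = ∑' t : ℕ, ∫⁻ ω in E t, f ω ∂(PrY x) := by
    have hc0 : ∫⁻ ω in Uᶜ, f ω ∂(PrY x) = 0 := by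
      have hae : ∀ᵐ ω ∂(PrY x), ω ∈ Uᶜ → f ω = 0 := by
        filter_upwards [hstart, hnn] with ω h0 hn hω
        have hne : ∀ s, ω s ≠ (n : ℤ) := hUc ω hω
        have habove : ∀ s : ℕ, (n : ℤ) < ω s := fun s =>
          stay_above h0 hn (s+1) (fun s' _ => hne s') s (Nat.lt_succ_self s)
        have hh : walkHit ω = ⊤ := walkHit_eq_top (fun t => by have := habove t; omega)
        simp [hf, walkDisc, hh]
      rw [setLIntegral_congr_fun_ae hUmeas.compl hae]
      simp
    rw [aL, ← lintegral_add_compl f hUmeas, hc0, add_zero, lintegral_iUnion hEmeas hdisj]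
  -- the hitting-time discount
  set c : ℕ → ℝ≥0∞ := fun t => ENNReal.ofReal (1/(1+β*t)) with hc
  -- per-term bound
  have hterm : ∀ t : ℕ, c t * PrY x (E t) * aL PrY β (n : ℤ)
      ≤ ∫⁻ ω in E t, f ω ∂(PrY x) := by
    intro t
    have hstep1 : ∫⁻ ω in E t, f ω ∂(PrY x)
        = ∫⁻ ω in E t, ENNReal.ofReal (walkDisc β t (shiftMap t ω)) ∂(PrY x) := by
      refine setLIntegral_congr_fun_ae (hEmeas t) ?_
      filter_upwards [hstart, hnn] with ω h0 hn hω
      have hab : ∀ s, s < t → (n : ℤ) < ω s := stay_above h0 hn t hω.2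
      have hne0 : ∀ s, s < t → ω s ≠ 0 := fun s hs => by have := hab s hs; omega
      show ENNReal.ofReal (walkDisc β 0 ω) = _
      rw [walkDisc_shift hne0]
      rfl
    have hstep2 : ∫⁻ ω in E t, ENNReal.ofReal (walkDisc β t (shiftMap t ω)) ∂(PrY x)
        = ∫⁻ ω in E t, (∫⁻ ψ, ENNReal.ofReal (walkDisc β t ψ) ∂(PrY (ω t))) ∂(PrY x) :=
      markov_shift_lintegral PrY QY hwalk x t (hEpath t) _
        (ENNReal.measurable_ofReal.comp (measurable_walkDisc β t))
    have hstep3 : ∫⁻ ω in E t, (∫⁻ ψ, ENNReal.ofReal (walkDisc β t ψ) ∂(PrY (ω t))) ∂(PrY x)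
        = (∫⁻ ψ, ENNReal.ofReal (walkDisc β t ψ) ∂(PrY (n : ℤ))) * PrY x (E t) := by
      rw [setLIntegral_congr_fun_ae (hEmeas t) (ae_of_all _ (fun ω hω => by rw [hω.1]))]
      rw [setLIntegral_const]
    have hstep4 : c t * aL PrY β (n : ℤ)
        ≤ ∫⁻ ψ, ENNReal.ofReal (walkDisc β t ψ) ∂(PrY (n : ℤ)) := by
      rw [aL, ← lintegral_const_mul' _ _ ENNReal.ofReal_ne_top]
      refine lintegral_mono fun ψ => ?_
      have hnn0 : (0:ℝ) ≤ 1 / (1 + β * (t:ℝ)) :=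
        le_of_lt (div_pos one_pos (one_add_pos hβ.le _ (by positivity)))
      rw [← ENNReal.ofReal_mul hnn0]
      exact ENNReal.ofReal_le_ofReal (walkDisc_mul_le hβ.le t ψ)
    calc c t * PrY x (E t) * aL PrY β (n : ℤ)
        = c t * aL PrY β (n : ℤ) * PrY x (E t) := by ring
      _ ≤ (∫⁻ ψ, ENNReal.ofReal (walkDisc β t ψ) ∂(PrY (n : ℤ))) * PrY x (E t) :=
          mul_le_mul_left hstep4 _
      _ = ∫⁻ ω in E t, f ω ∂(PrY x) := by rw [← hstep3, ← hstep2, ← hstep1]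
  -- identification of the hitting-time transform with aL 1
  have htrans : (PrY x).map (transMap (-(n : ℤ))) = PrY 1 := by
    rw [trans_inv PrY QY hwalk hQY x (-(n : ℤ))]
    congr 1
    omega
  have ha1 : aL PrY β 1 = ∑' t : ℕ, c t * PrY x (E t) := by
    have h1 : aL PrY β 1
        = ∫⁻ ω, ENNReal.ofReal (walkDisc β 0 (transMap (-(n : ℤ)) ω)) ∂(PrY x) := by
      rw [aL, ← htrans, lintegral_map hfm (measurable_transMap _)]
    have hc0 : ∫⁻ ω in Uᶜ, ENNReal.ofReal (walkDisc β 0 (transMap (-(n : ℤ)) ω)) ∂(PrY x)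
        = 0 := by
      have hae : ∀ ω ∈ Uᶜ, ENNReal.ofReal (walkDisc β 0 (transMap (-(n : ℤ)) ω)) = 0 := by
        intro ω hω
        have hne : ∀ s, ω s ≠ (n : ℤ) := hUc ω hω
        have hh : walkHit (transMap (-(n : ℤ)) ω) = ⊤ :=
          walkHit_eq_top (fun t => by have := hne t; simp [transMap]; omega)
        simp [walkDisc, hh]
      rw [setLIntegral_congr_fun_ae hUmeas.compl (ae_of_all _ hae)]
      simp
    have hEt : ∀ t, ∫⁻ ω in E t,
        ENNReal.ofReal (walkDisc β 0 (transMap (-(n : ℤ)) ω)) ∂(PrY x)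
        = c t * PrY x (E t) := by
      intro t
      have hae : ∀ ω ∈ E t, ENNReal.ofReal (walkDisc β 0 (transMap (-(n : ℤ)) ω)) = c t := by
        intro ω hω
        have hh : walkHit (transMap (-(n : ℤ)) ω) = (t : ℕ∞) := by
          refine walkHit_eq ?_ ?_
          · have h1 := hω.1
            simp [transMap]; omega
          · intro s hs
            have := hω.2 s hs
            simp [transMap]
            omega
        rw [walkDisc, if_neg (by rw [hh]; exact ENat.coe_ne_top t), hh, ENat.toNat_coe, hc]
        norm_num
      rw [setLIntegral_congr_fun_ae (hEmeas t) (ae_of_all _ hae), setLIntegral_const]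
    rw [h1, ← lintegral_add_compl
      (fun ω => ENNReal.ofReal (walkDisc β 0 (transMap (-(n : ℤ)) ω))) hUmeas, hc0, add_zero,
      lintegral_iUnion hEmeas hdisj]
    exact tsum_congr hEt
  -- put everything together
  calc aL PrY β (n : ℤ) * aL PrY β 1
      = aL PrY β 1 * aL PrY β (n : ℤ) := mul_comm _ _
    _ = (∑' t : ℕ, c t * PrY x (E t)) * aL PrY β (n : ℤ) := by rw [ha1]
    _ = ∑' t : ℕ, c t * PrY x (E t) * aL PrY β (n : ℤ) := (ENNReal.tsum_mul_right).symm
    _ ≤ ∑' t : ℕ, ∫⁻ ω in E t, f ω ∂(PrY x) := ENNReal.tsum_le_tsum hterm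
    _ = aL PrY β x := hsplit.symm

end Kernels
end WalkProof

/-- For the random walk with upward probability `p`, the discounted hitting values
satisfy `α_n ≥ (α₁)ⁿ` for all `n ≥ 1`. -/
theorem alphaWalk_pow_le
    (p β : ℝ) (hp0 : 0 < p) (hp1 : p < 1) (hβ : 0 < β)
    (PrY : Kernel ℤ (ℕ → ℤ)) [IsMarkovKernel PrY] (QY : Kernel ℤ ℤ) [IsMarkovKernel QY]
    (hwalk : IsMarkovChainLaw PrY QY)
    (hQY : ∀ n : ℤ, QY n = ENNReal.ofReal p • Measure.dirac (n + 1)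
      + ENNReal.ofReal (1 - p) • Measure.dirac (n - 1))
 :
    ∀ n : ℕ, 1 ≤ n → alphaWalk PrY β 1 ^ n ≤ alphaWalk PrY β (n : ℤ) := by
  have haL_ne_top : ∀ x : ℤ, WalkProof.aL PrY β x ≠ ⊤ := by
    intro x
    have h1 : WalkProof.aL PrY β x ≤ 1 := by
      rw [WalkProof.aL]
      calc ∫⁻ ω, ENNReal.ofReal (walkDisc β 0 ω) ∂(PrY x)
          ≤ ∫⁻ _, 1 ∂(PrY x) := lintegral_mono fun ω =>
            ENNReal.ofReal_le_one.2 (WalkProof.walkDisc_le_one hβ.le 0 ω)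
        _ = 1 := by simp [measure_univ]
    exact ne_top_of_le_ne_top ENNReal.one_ne_top h1
  have halpha : ∀ x : ℤ, alphaWalk PrY β x = (WalkProof.aL PrY β x).toReal := by
    intro x
    rw [alphaWalk, WalkProof.aL]
    rw [integral_eq_lintegral_of_nonneg_ae
      (ae_of_all _ (fun ω => WalkProof.walkDisc_nonneg hβ.le 0 ω))
      ((WalkProof.measurable_walkDisc β 0).aestronglyMeasurable)]
  have hpow : ∀ n : ℕ, 1 ≤ n → WalkProof.aL PrY β 1 ^ n ≤ WalkProof.aL PrY β (n : ℤ) := by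
    intro n hn
    induction n with
    | zero => omega
    | succ m ih =>
      by_cases hm : 1 ≤ m
      · have hkey := WalkProof.key_step PrY QY hβ hwalk hQY m
        calc WalkProof.aL PrY β 1 ^ (m+1)
            = WalkProof.aL PrY β 1 ^ m * WalkProof.aL PrY β 1 := pow_succ _ _
          _ ≤ WalkProof.aL PrY β (m : ℤ) * WalkProof.aL PrY β 1 :=
              mul_le_mul_left (ih hm) _
          _ ≤ WalkProof.aL PrY β ((m : ℤ) + 1) := hkey
          _ = WalkProof.aL PrY β (((m+1 : ℕ)) : ℤ) := by push_cast; ring_nf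
      · have hm0 : m = 0 := by omega
        subst hm0
        norm_num
  intro n hn
  rw [halpha 1, halpha (n : ℤ), ← ENNReal.toReal_pow]
  exact ENNReal.toReal_mono (haL_ne_top _) (hpow n hn)

end
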